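/- In the setting of the bialgebra structure on B = Coend(F) for a tensor functor (F, Id_I, F₂) from a strict tensor category C to Vect_k^f: the multiplication maps m_{X,Y} := i_{X⊗Y} ∘ conj(F₂) : Hom_k(F(X) ⊗ F(Y), F(X) ⊗ F(Y)) → B, where conj(F₂)(W) = F₂ ∘ W ∘ F₂^{-1}, are coalgebra maps (from the comatrix coalgebra on Hom_k(F(X)⊗F(Y), F(X)⊗F(Y)) to B), and consequently the multiplication m : B ⊗ B → B and unit η : k → B are coalgebra morphisms. -/

import Mathlib

/- STATEMENT 13: in the bialgebra B = Coend(F) of a tensor functor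
(F, Id_I, F₂) on a strict tensor category, the maps
m_{X,Y} = i_{X⊗Y} ∘ conj(F₂) : End_k(F X ⊗ F Y) → B are coalgebra maps from
the comatrix coalgebra, and consequently the multiplication m : B ⊗ B → B and
the unit η : k → B are coalgebra morphisms. -/

open CategoryTheory TensorProduct MonoidalCategory Functor.LaxMonoidal Functor.OplaxMonoidal

noncomputable section
universe w₁ w₂ u
variable (k : Type) [Field k]

def smulRightL {M : Type} [AddCommGroup M] [Module k M] (x : M) :
    (M →ₗ[k] k) →ₗ[k] (M →ₗ[k] M) where
  toFun f := f.smulRight x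
  map_add' f g := by ext y; simp [add_smul]
  map_smul' c f := by ext y; simp [smul_smul]

/-- The comatrix comultiplication on `Hom_k(M,M)`; the counit is the trace. -/
def comatrixComul (M : Type) [AddCommGroup M] [Module k M] [Module.Finite k M] :
    (M →ₗ[k] M) →ₗ[k] ((M →ₗ[k] M) ⊗[k] (M →ₗ[k] M)) :=
  let b := Module.Free.chooseBasis k M
  ∑ i, ∑ l,
    ((TensorProduct.mk k (M →ₗ[k] M) (M →ₗ[k] M)).flip ((b.coord l).smulRight (b i))) ∘ₗ
      (smulRightL k (b l)) ∘ₗ (LinearMap.llcomp k M M k (b.coord i))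

variable (C : Type u) [SmallCategory C] [MonoidalCategory C] [Preadditive C]
  [CategoryTheory.Linear k C] [Abelian C]
variable (F : C ⥤ ModuleCat k) [F.Monoidal] [F.Additive] [F.Linear k]

/-- Dinaturality of a family of maps `Hom_k(F X, F X) → U`. -/
def DinatC (U : Type w₁) [AddCommGroup U] [Module k U]
    (i : ∀ X : C, (F.obj X →ₗ[k] F.obj X) →ₗ[k] U) : Prop :=
  ∀ (X Y : C) (f : Y ⟶ X) (S : F.obj X →ₗ[k] F.obj Y),
    i X (((F.map f).hom : F.obj Y →ₗ[k] F.obj X) ∘ₗ S)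
      = i Y (S ∘ₗ ((F.map f).hom : F.obj Y →ₗ[k] F.obj X))

/-- `(U, i)` is a realization of `Coend(F)`. -/
def IsCoendRealization (U : Type w₁) [AddCommGroup U] [Module k U]
    (i : ∀ X : C, (F.obj X →ₗ[k] F.obj X) →ₗ[k] U) : Prop :=
  DinatC k C F U i ∧
  ∀ (V : Type w₂) [AddCommGroup V] [Module k V]
    (j : ∀ X : C, (F.obj X →ₗ[k] F.obj X) →ₗ[k] V), DinatC k C F V j →
    ∃! φ : U →ₗ[k] V, ∀ X : C, φ ∘ₗ i X = j X

/-- Conjugation `W ↦ P ∘ W ∘ Q` as a linear map on endomorphisms. -/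
def conjL {M N : Type} [AddCommGroup M] [Module k M] [AddCommGroup N] [Module k N]
    (P : M →ₗ[k] N) (Q : N →ₗ[k] M) : (M →ₗ[k] M) →ₗ[k] (N →ₗ[k] N) where
  toFun S := P ∘ₗ S ∘ₗ Q
  map_add' S T := by ext y; simp
  map_smul' c S := by ext y; simp

/-! ### Auxiliary lemmas -/

section Aux

open Module

variable {k} {M N : Type} [AddCommGroup M] [Module k M] [AddCommGroup N] [Module k N]

/-- The comatrix comultiplication with respect to an arbitrary finite basis. -/
def comatrixComulB {ι : Type} [Fintype ι] (b : Basis ι k M) :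
    (M →ₗ[k] M) →ₗ[k] ((M →ₗ[k] M) ⊗[k] (M →ₗ[k] M)) :=
  ∑ i, ∑ l,
    ((TensorProduct.mk k (M →ₗ[k] M) (M →ₗ[k] M)).flip ((b.coord l).smulRight (b i))) ∘ₗ
      (smulRightL k (b l)) ∘ₗ (LinearMap.llcomp k M M k (b.coord i))

lemma comatrixComul_eq_comatrixComulB [Module.Finite k M] :
    comatrixComul k M = comatrixComulB (Module.Free.chooseBasis k M) := rfl

lemma comatrixComulB_apply {ι : Type} [Fintype ι] (b : Basis ι k M) (S : M →ₗ[k] M) :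
    comatrixComulB b S = ∑ i, ∑ l,
      ((b.coord i ∘ₗ S).smulRight (b l)) ⊗ₜ[k] ((b.coord l).smulRight (b i)) := by
  simp only [comatrixComulB, LinearMap.sum_apply, LinearMap.comp_apply]
  rfl

/-- The auxiliary bilinear-in-two-tensor-slots map used to prove basis
independence of the comatrix comultiplication. -/
def psiAux (S : M →ₗ[k] M) :
    ((Module.Dual k M ⊗[k] M) ⊗[k] (Module.Dual k M ⊗[k] M)) →ₗ[k]
      ((M →ₗ[k] M) ⊗[k] (M →ₗ[k] M)) :=
  (TensorProduct.map
      ((dualTensorHom k M M) ∘ₗ TensorProduct.map S.dualMap LinearMap.id)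
      (dualTensorHom k M M)) ∘ₗ
    (TensorProduct.tensorTensorTensorComm k (Module.Dual k M) (Module.Dual k M) M
        M).toLinearMap ∘ₗ
    (TensorProduct.map LinearMap.id (TensorProduct.comm k M M).toLinearMap) ∘ₗ
    (TensorProduct.tensorTensorTensorComm k (Module.Dual k M) M (Module.Dual k M)
        M).toLinearMap

lemma psiAux_apply (S : M →ₗ[k] M) (f g : Module.Dual k M) (x y : M) :
    psiAux S ((f ⊗ₜ[k] x) ⊗ₜ[k] (g ⊗ₜ[k] y))
      = ((f ∘ₗ S).smulRight y) ⊗ₜ[k] (g.smulRight x) := by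
  simp [psiAux, TensorProduct.tensorTensorTensorComm_tmul, dualTensorHom_apply,
    LinearMap.dualMap_apply]
  rfl

lemma comatrixComulB_eq_psiAux {ι : Type} [Fintype ι] (b : Basis ι k M) (S : M →ₗ[k] M) :
    comatrixComulB b S
      = psiAux S ((∑ i, b.coord i ⊗ₜ[k] b i) ⊗ₜ[k] (∑ i, b.coord i ⊗ₜ[k] b i)) := by
  rw [comatrixComulB_apply]
  rw [TensorProduct.sum_tmul, map_sum]
  refine Finset.sum_congr rfl fun i _ => ?_
  rw [TensorProduct.tmul_sum, map_sum]
  exact Finset.sum_congr rfl fun l _ => (psiAux_apply S _ _ _ _).symm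

lemma sum_coord_tmul_indep [Module.Finite k M] {ι κ : Type} [Fintype ι] [Fintype κ]
    (b : Basis ι k M) (c : Basis κ k M) :
    (∑ i, b.coord i ⊗ₜ[k] b i) = (∑ j, c.coord j ⊗ₜ[k] c j) := by
  classical
  have hid : ∀ {σ : Type} [Fintype σ] (d : Basis σ k M),
      dualTensorHom k M M (∑ i, d.coord i ⊗ₜ[k] d i) = LinearMap.id := by
    intro σ _ d
    rw [map_sum]
    ext x
    simp only [LinearMap.coe_sum, Finset.sum_apply, dualTensorHom_apply,
      Basis.coord_apply, LinearMap.id_coe, id_eq]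
    exact d.sum_repr x
  have := (dualTensorHomEquivOfBasis (R := k) (M := M) (N := M) b).injective
  apply this
  rw [dualTensorHomEquivOfBasis_apply, dualTensorHomEquivOfBasis_apply, hid b, hid c]

lemma comatrixComulB_indep [Module.Finite k M] {ι κ : Type} [Fintype ι] [Fintype κ]
    (b : Basis ι k M) (c : Basis κ k M) :
    comatrixComulB b = comatrixComulB c := by
  ext S
  rw [comatrixComulB_eq_psiAux, comatrixComulB_eq_psiAux, sum_coord_tmul_indep b c]

lemma comatrixComulB_map_conj {ι : Type} [Fintype ι] (b : Basis ι k M)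
    (e : M ≃ₗ[k] N) (S : M →ₗ[k] M) :
    comatrixComulB (b.map e) (conjL k e.toLinearMap e.symm.toLinearMap S)
      = TensorProduct.map (conjL k e.toLinearMap e.symm.toLinearMap)
          (conjL k e.toLinearMap e.symm.toLinearMap) (comatrixComulB b S) := by
  rw [comatrixComulB_apply, comatrixComulB_apply, map_sum]
  refine Finset.sum_congr rfl fun i _ => ?_
  rw [map_sum]
  refine Finset.sum_congr rfl fun l _ => ?_
  rw [TensorProduct.map_tmul]
  congr 1
  · ext x
    simp [conjL, Basis.map_apply, Basis.coord_apply, Basis.map_repr, map_smul]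
  · ext x
    simp [conjL, Basis.map_apply, Basis.coord_apply, Basis.map_repr, map_smul]

lemma tensor_coord_smulRight {ι κ : Type} [Fintype ι] [Fintype κ]
    (b : Basis ι k M) (c : Basis κ k N) (S : M →ₗ[k] M) (T : N →ₗ[k] N)
    (i l : ι) (j m : κ) :
    (((b.tensorProduct c).coord (i, j)) ∘ₗ TensorProduct.map S T).smulRight
        ((b.tensorProduct c) (l, m))
      = TensorProduct.map ((b.coord i ∘ₗ S).smulRight (b l))
          ((c.coord j ∘ₗ T).smulRight (c m)) := by
  apply TensorProduct.ext'
  intro x y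
  simp only [LinearMap.smulRight_apply, LinearMap.comp_apply, TensorProduct.map_tmul,
    Basis.tensorProduct_apply', Basis.coord_apply, Basis.tensorProduct_repr_tmul_apply,
    smul_eq_mul]
  rw [mul_smul, TensorProduct.smul_tmul', TensorProduct.tmul_smul]

lemma tensor_coord_smulRight' {ι κ : Type} [Fintype ι] [Fintype κ]
    (b : Basis ι k M) (c : Basis κ k N) (i l : ι) (j m : κ) :
    ((b.tensorProduct c).coord (i, j)).smulRight ((b.tensorProduct c) (l, m))
      = TensorProduct.map ((b.coord i).smulRight (b l)) ((c.coord j).smulRight (c m)) := by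
  have := tensor_coord_smulRight b c (LinearMap.id) (LinearMap.id) i l j m
  simpa using this

open Module in
lemma comatrixComul_of_finrank_one [Module.Finite k M]
    (h1 : Module.finrank k M = 1) :
    comatrixComul k M LinearMap.id = (LinearMap.id : M →ₗ[k] M) ⊗ₜ[k] LinearMap.id := by
  have hcard : Fintype.card (Module.Free.ChooseBasisIndex k M) = 1 := by
    rw [← Module.finrank_eq_card_chooseBasisIndex, h1]
  obtain ⟨a, ha⟩ := Fintype.card_eq_one_iff.mp hcard
  haveI : Unique (Module.Free.ChooseBasisIndex k M) := ⟨⟨a⟩, ha⟩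
  set b := Module.Free.chooseBasis k M with hb
  have hid : (b.coord a).smulRight (b a) = LinearMap.id := by
    ext x
    have hr := b.sum_repr x
    rw [Fintype.sum_unique] at hr
    have hda : (default : Module.Free.ChooseBasisIndex k M) = a := ha default
    rw [hda] at hr
    simpa [Module.Basis.coord_apply] using hr
  rw [comatrixComul_eq_comatrixComulB, comatrixComulB_apply]
  rw [Fintype.sum_unique, Fintype.sum_unique]
  have hda : (default : Module.Free.ChooseBasisIndex k M) = a := ha default
  rw [hda]
  rw [LinearMap.comp_id, hid]

lemma sum_swap4 {α β γ δ A : Type} [Fintype α] [Fintype β] [Fintype γ] [Fintype δ]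
    [AddCommMonoid A] (f : α → β → γ → δ → A) :
    ∑ j : β, ∑ m : δ, ∑ i : α, ∑ l : γ, f i j l m
      = ∑ i : α, ∑ j : β, ∑ l : γ, ∑ m : δ, f i j l m :=
  calc ∑ j : β, ∑ m : δ, ∑ i : α, ∑ l : γ, f i j l m
      = ∑ j : β, ∑ i : α, ∑ m : δ, ∑ l : γ, f i j l m :=
        Finset.sum_congr rfl fun _ _ => Finset.sum_comm
    _ = ∑ i : α, ∑ j : β, ∑ m : δ, ∑ l : γ, f i j l m := Finset.sum_comm
    _ = ∑ i : α, ∑ j : β, ∑ l : γ, ∑ m : δ, f i j l m :=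
        Finset.sum_congr rfl fun _ _ => Finset.sum_congr rfl fun _ _ => Finset.sum_comm

lemma trace_of_finrank_one [Module.Finite k M] (h1 : Module.finrank k M = 1) :
    LinearMap.trace k M LinearMap.id = 1 := by
  rw [LinearMap.trace_id, h1, Nat.cast_one]

end Aux

section Ext

variable {k C F}

/-- Extensionality for maps out of a coend realization. -/
lemma coend_ext {U : Type} [AddCommGroup U] [Module k U]
    {i : ∀ X : C, (F.obj X →ₗ[k] F.obj X) →ₗ[k] U}
    (hreal : IsCoendRealization.{0, 0} k C F U i)
    {W : Type} [AddCommGroup W] [Module k W] (φ ψ : U →ₗ[k] W)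
    (h : ∀ X : C, φ ∘ₗ i X = ψ ∘ₗ i X) : φ = ψ := by
  have hdin : DinatC k C F W (fun X => φ ∘ₗ i X) := by
    intro X Y f S
    simp only [LinearMap.comp_apply]
    exact congrArg φ (hreal.1 X Y f S)
  obtain ⟨θ, hθ, huniq⟩ := hreal.2 W (fun X => φ ∘ₗ i X) hdin
  have h1 : φ = θ := huniq φ (fun X => rfl)
  have h2 : ψ = θ := huniq ψ (fun X => (h X).symm)
  rw [h1, h2]

/-- Extensionality for maps out of the tensor square of a coend realization. -/
lemma coend_ext₂ {U : Type} [AddCommGroup U] [Module k U]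
    {i : ∀ X : C, (F.obj X →ₗ[k] F.obj X) →ₗ[k] U}
    (hreal : IsCoendRealization.{0, 0} k C F U i)
    {W : Type} [AddCommGroup W] [Module k W] (A B : U ⊗[k] U →ₗ[k] W)
    (h : ∀ (X Y : C) (S : F.obj X →ₗ[k] F.obj X) (T : F.obj Y →ₗ[k] F.obj Y),
      A (i X S ⊗ₜ[k] i Y T) = B (i X S ⊗ₜ[k] i Y T)) : A = B := by
  have h1 : ∀ (X : C) (S : F.obj X →ₗ[k] F.obj X) (u : U),
      A (i X S ⊗ₜ[k] u) = B (i X S ⊗ₜ[k] u) := by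
    intro X S u
    have := coend_ext hreal (A ∘ₗ TensorProduct.mk k U U (i X S))
      (B ∘ₗ TensorProduct.mk k U U (i X S)) (fun Y => by ext T; exact h X Y S T)
    exact LinearMap.congr_fun this u
  have h2 : ∀ (u v : U), A (v ⊗ₜ[k] u) = B (v ⊗ₜ[k] u) := by
    intro u v
    have := coend_ext hreal (A ∘ₗ (TensorProduct.mk k U U).flip u)
      (B ∘ₗ (TensorProduct.mk k U U).flip u) (fun X => by ext S; exact h1 X S u)
    exact LinearMap.congr_fun this v
  exact TensorProduct.ext' fun v u => h2 u v

end Ext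

set_option maxHeartbeats 1600000 in
theorem coend_multiplication_is_coalgebra_map
    (hobj : ∀ X Y Z : C, (X ⊗ Y) ⊗ Z = X ⊗ (Y ⊗ Z))
    (hassoc : ∀ X Y Z : C, (α_ X Y Z).hom = eqToHom (hobj X Y Z))
    (hul : ∀ X : C, 𝟙_ C ⊗ X = X) (hlam : ∀ X : C, (λ_ X).hom = eqToHom (hul X))
    (hur : ∀ X : C, X ⊗ 𝟙_ C = X) (hrho : ∀ X : C, (ρ_ X).hom = eqToHom (hur X))
    (hfd : ∀ X : C, FiniteDimensional k (F.obj X))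
    (U : Type) [AddCommGroup U] [Module k U]
    (i : ∀ X : C, (F.obj X →ₗ[k] F.obj X) →ₗ[k] U)
    (hreal : IsCoendRealization.{0, 0} k C F U i)
    (Δ : U →ₗ[k] U ⊗[k] U) (ε : U →ₗ[k] k)
    (hΔ : ∀ X : C, haveI := hfd X;
      Δ ∘ₗ i X = (TensorProduct.map (i X) (i X)) ∘ₗ comatrixComul k (F.obj X))
    (hε : ∀ X : C, ε ∘ₗ i X = LinearMap.trace k (F.obj X))
    -- the multiplication m and unit η of B = Coend(F):
    (m : U ⊗[k] U →ₗ[k] U)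
    (hm : ∀ (X Y : C) (S : F.obj X →ₗ[k] F.obj X) (T : F.obj Y →ₗ[k] F.obj Y),
      m (i X S ⊗ₜ[k] i Y T)
        = i (X ⊗ Y) (((μ F X Y).hom : (F.obj X ⊗[k] F.obj Y) →ₗ[k] F.obj (X ⊗ Y)) ∘ₗ
            (TensorProduct.map S T) ∘ₗ
            ((δ F X Y).hom : F.obj (X ⊗ Y) →ₗ[k] (F.obj X ⊗[k] F.obj Y)))) :
    -- each m_{X,Y} = i_{X⊗Y} ∘ conj(F₂) is a coalgebra map:
    (∀ X Y : C,
      Δ ∘ₗ (i (X ⊗ Y) ∘ₗ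
          conjL k ((μ F X Y).hom : (F.obj X ⊗[k] F.obj Y) →ₗ[k] F.obj (X ⊗ Y))
            ((δ F X Y).hom : F.obj (X ⊗ Y) →ₗ[k] (F.obj X ⊗[k] F.obj Y)))
        = (TensorProduct.map
            (i (X ⊗ Y) ∘ₗ conjL k ((μ F X Y).hom : (F.obj X ⊗[k] F.obj Y) →ₗ[k] F.obj (X ⊗ Y))
              ((δ F X Y).hom : F.obj (X ⊗ Y) →ₗ[k] (F.obj X ⊗[k] F.obj Y)))
            (i (X ⊗ Y) ∘ₗ conjL k ((μ F X Y).hom : (F.obj X ⊗[k] F.obj Y) →ₗ[k] F.obj (X ⊗ Y))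
              ((δ F X Y).hom : F.obj (X ⊗ Y) →ₗ[k] (F.obj X ⊗[k] F.obj Y)))) ∘ₗ
            comatrixComul k (F.obj X ⊗[k] F.obj Y)) ∧
    (∀ X Y : C,
      ε ∘ₗ (i (X ⊗ Y) ∘ₗ
          conjL k ((μ F X Y).hom : (F.obj X ⊗[k] F.obj Y) →ₗ[k] F.obj (X ⊗ Y))
            ((δ F X Y).hom : F.obj (X ⊗ Y) →ₗ[k] (F.obj X ⊗[k] F.obj Y)))
        = LinearMap.trace k (F.obj X ⊗[k] F.obj Y)) ∧
    -- consequently m and η are coalgebra morphisms: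
    (Δ ∘ₗ m = (TensorProduct.map m m) ∘ₗ
        (tensorTensorTensorComm k U U U U).toLinearMap ∘ₗ (TensorProduct.map Δ Δ)) ∧
    (ε ∘ₗ m = (TensorProduct.lid k k).toLinearMap ∘ₗ TensorProduct.map ε ε) ∧
    (Δ (i (𝟙_ C) LinearMap.id)
      = i (𝟙_ C) LinearMap.id ⊗ₜ[k] i (𝟙_ C) LinearMap.id) ∧
    (ε (i (𝟙_ C) LinearMap.id) = 1) := by
  classical
  -- notation
  set P : ∀ X Y : C, (F.obj X ⊗[k] F.obj Y) →ₗ[k] F.obj (X ⊗ Y) :=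
    fun X Y => ((μ F X Y).hom : (F.obj X ⊗[k] F.obj Y) →ₗ[k] F.obj (X ⊗ Y)) with hP
  set Q : ∀ X Y : C, (F.obj (X ⊗ Y) : Type) →ₗ[k] (F.obj X ⊗[k] F.obj Y) :=
    fun X Y => ((δ F X Y).hom : (F.obj (X ⊗ Y) : Type) →ₗ[k] (F.obj X ⊗[k] F.obj Y)) with hQ
  have hPQ : ∀ X Y : C, (P X Y) ∘ₗ (Q X Y) = LinearMap.id := fun X Y =>
    congrArg ModuleCat.Hom.hom (Functor.Monoidal.δ_μ (F := F) X Y)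
  have hQP : ∀ X Y : C, (Q X Y) ∘ₗ (P X Y) = LinearMap.id := fun X Y =>
    congrArg ModuleCat.Hom.hom (Functor.Monoidal.μ_δ (F := F) X Y)
  let e : ∀ X Y : C, (F.obj X ⊗[k] F.obj Y) ≃ₗ[k] F.obj (X ⊗ Y) := fun X Y =>
    LinearEquiv.ofLinear (P X Y) (Q X Y) (hPQ X Y) (hQP X Y)
  -- Part 1 : each m_{X,Y} is comultiplicative
  have key : ∀ X Y : C,
      comatrixComul k (F.obj (X ⊗ Y)) ∘ₗ conjL k (P X Y) (Q X Y)
        = TensorProduct.map (conjL k (P X Y) (Q X Y)) (conjL k (P X Y) (Q X Y)) ∘ₗ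
            comatrixComul k (F.obj X ⊗[k] F.obj Y) := by
    intro X Y
    ext S
    have hbase := comatrixComulB_indep
      (Module.Free.chooseBasis k (F.obj (X ⊗ Y)))
      ((Module.Free.chooseBasis k (F.obj X ⊗[k] F.obj Y)).map (e X Y))
    simp only [LinearMap.comp_apply]
    rw [comatrixComul_eq_comatrixComulB, hbase, comatrixComul_eq_comatrixComulB]
    exact comatrixComulB_map_conj (Module.Free.chooseBasis k (F.obj X ⊗[k] F.obj Y))
      (e X Y) S
  have part1 : ∀ X Y : C,
      Δ ∘ₗ (i (X ⊗ Y) ∘ₗ conjL k (P X Y) (Q X Y))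
        = (TensorProduct.map (i (X ⊗ Y) ∘ₗ conjL k (P X Y) (Q X Y))
            (i (X ⊗ Y) ∘ₗ conjL k (P X Y) (Q X Y))) ∘ₗ
            comatrixComul k (F.obj X ⊗[k] F.obj Y) := by
    intro X Y
    calc Δ ∘ₗ (i (X ⊗ Y) ∘ₗ conjL k (P X Y) (Q X Y))
        = (Δ ∘ₗ i (X ⊗ Y)) ∘ₗ conjL k (P X Y) (Q X Y) := by
          rw [LinearMap.comp_assoc]
      _ = (TensorProduct.map (i (X ⊗ Y)) (i (X ⊗ Y)) ∘ₗ
            comatrixComul k (F.obj (X ⊗ Y))) ∘ₗ conjL k (P X Y) (Q X Y) := by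
          rw [hΔ (X ⊗ Y)]
      _ = TensorProduct.map (i (X ⊗ Y)) (i (X ⊗ Y)) ∘ₗ
            (comatrixComul k (F.obj (X ⊗ Y)) ∘ₗ conjL k (P X Y) (Q X Y)) := by
          rw [LinearMap.comp_assoc]
      _ = TensorProduct.map (i (X ⊗ Y)) (i (X ⊗ Y)) ∘ₗ
            (TensorProduct.map (conjL k (P X Y) (Q X Y)) (conjL k (P X Y) (Q X Y)) ∘ₗ
              comatrixComul k (F.obj X ⊗[k] F.obj Y)) := by rw [key X Y]
      _ = (TensorProduct.map (i (X ⊗ Y) ∘ₗ conjL k (P X Y) (Q X Y))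
            (i (X ⊗ Y) ∘ₗ conjL k (P X Y) (Q X Y))) ∘ₗ
            comatrixComul k (F.obj X ⊗[k] F.obj Y) := by
          rw [← LinearMap.comp_assoc, ← TensorProduct.map_comp]
  -- Part 2 : counit compatibility for each m_{X,Y}
  have part2 : ∀ X Y : C,
      ε ∘ₗ (i (X ⊗ Y) ∘ₗ conjL k (P X Y) (Q X Y))
        = LinearMap.trace k (F.obj X ⊗[k] F.obj Y) := by
    intro X Y
    ext S
    simp only [LinearMap.comp_apply]
    have h1 : ε (i (X ⊗ Y) (conjL k (P X Y) (Q X Y) S))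
        = LinearMap.trace k (F.obj (X ⊗ Y)) (conjL k (P X Y) (Q X Y) S) :=
      LinearMap.congr_fun (hε (X ⊗ Y)) _
    rw [h1]
    have h2 : conjL k (P X Y) (Q X Y) S = (e X Y).conj S := by
      ext x; rfl
    rw [h2, LinearMap.trace_conj']
  -- elementwise multiplication formula, rephrased
  have hmc : ∀ (X Y : C) (S : F.obj X →ₗ[k] F.obj X) (T : F.obj Y →ₗ[k] F.obj Y),
      m (i X S ⊗ₜ[k] i Y T)
        = (i (X ⊗ Y) ∘ₗ conjL k (P X Y) (Q X Y)) (TensorProduct.map S T) := hm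
  -- Part 3 : Δ ∘ m = (m ⊗ m) ∘ (13)(24)-shuffle ∘ (Δ ⊗ Δ)
  have part3 : Δ ∘ₗ m = (TensorProduct.map m m) ∘ₗ
      (tensorTensorTensorComm k U U U U).toLinearMap ∘ₗ (TensorProduct.map Δ Δ) := by
    apply coend_ext₂ hreal
    intro X Y S T
    haveI := hfd X; haveI := hfd Y
    set bX := Module.Free.chooseBasis k (F.obj X) with hbX
    set bY := Module.Free.chooseBasis k (F.obj Y) with hbY
    set J : ((F.obj X ⊗[k] F.obj Y) →ₗ[k] (F.obj X ⊗[k] F.obj Y)) →ₗ[k] U :=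
      i (X ⊗ Y) ∘ₗ conjL k (P X Y) (Q X Y) with hJ
    -- left hand side
    have lhs1 : (Δ ∘ₗ m) (i X S ⊗ₜ[k] i Y T)
        = TensorProduct.map J J
            (comatrixComulB (bX.tensorProduct bY) (TensorProduct.map S T)) := by
      have := LinearMap.congr_fun (part1 X Y) (TensorProduct.map S T)
      simp only [LinearMap.comp_apply] at this ⊢
      rw [hmc X Y S T]
      rw [show Δ ((i (X ⊗ Y) ∘ₗ conjL k (P X Y) (Q X Y)) (TensorProduct.map S T))
            = Δ (i (X ⊗ Y) (conjL k (P X Y) (Q X Y) (TensorProduct.map S T))) from rfl]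
      rw [this]
      rw [comatrixComul_eq_comatrixComulB,
        comatrixComulB_indep (Module.Free.chooseBasis k (F.obj X ⊗[k] F.obj Y))
          (bX.tensorProduct bY)]
    rw [lhs1]
    -- right hand side
    have hΔX := LinearMap.congr_fun (hΔ X) S
    have hΔY := LinearMap.congr_fun (hΔ Y) T
    simp only [LinearMap.comp_apply] at hΔX hΔY
    rw [comatrixComul_eq_comatrixComulB, comatrixComulB_apply] at hΔX hΔY
    simp only [LinearMap.comp_apply, TensorProduct.map_tmul, hΔX, hΔY]
    rw [comatrixComulB_apply]
    -- expand everything into quadruple sums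
    simp only [map_sum, TensorProduct.sum_tmul, TensorProduct.tmul_sum,
      LinearEquiv.coe_coe, TensorProduct.map_tmul,
      TensorProduct.tensorTensorTensorComm_tmul]
    simp only [Fintype.sum_prod_type]
    conv_rhs => rw [sum_swap4]
    refine Finset.sum_congr rfl fun i' _ => ?_
    refine Finset.sum_congr rfl fun j' _ => ?_
    refine Finset.sum_congr rfl fun l' _ => ?_
    refine Finset.sum_congr rfl fun m' _ => ?_
    rw [tensor_coord_smulRight, tensor_coord_smulRight', hm X Y, hm X Y]
    rfl
  -- Part 4 : ε ∘ m = multiplication on k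
  have part4 : ε ∘ₗ m
      = (TensorProduct.lid k k).toLinearMap ∘ₗ TensorProduct.map ε ε := by
    apply coend_ext₂ hreal
    intro X Y S T
    haveI := hfd X; haveI := hfd Y
    simp only [LinearMap.comp_apply, TensorProduct.map_tmul]
    rw [hm X Y S T]
    have h1 : ε (i (X ⊗ Y) ((P X Y) ∘ₗ TensorProduct.map S T ∘ₗ (Q X Y)))
        = LinearMap.trace k (F.obj (X ⊗ Y)) ((P X Y) ∘ₗ TensorProduct.map S T ∘ₗ (Q X Y)) :=
      LinearMap.congr_fun (hε (X ⊗ Y)) _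
    rw [h1]
    have h2 : (P X Y) ∘ₗ TensorProduct.map S T ∘ₗ (Q X Y) = (e X Y).conj (TensorProduct.map S T) := by
      ext x; rfl
    rw [h2, LinearMap.trace_conj', LinearMap.trace_tensorProduct' S T]
    have hX := LinearMap.congr_fun (hε X) S
    have hY := LinearMap.congr_fun (hε Y) T
    simp only [LinearMap.comp_apply] at hX hY
    simp only [LinearEquiv.coe_coe, TensorProduct.lid_tmul, hX, hY, smul_eq_mul]
  -- Parts 5 & 6 : the unit is grouplike
  haveI := hfd (𝟙_ C)
  have e0 : (F.obj (𝟙_ C) : Type) ≃ₗ[k] k :=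
    LinearEquiv.ofLinear ((η F).hom : (F.obj (𝟙_ C) : Type) →ₗ[k] k)
      ((Functor.LaxMonoidal.ε F).hom : k →ₗ[k] F.obj (𝟙_ C))
      (congrArg ModuleCat.Hom.hom (Functor.Monoidal.ε_η (F := F))) (congrArg ModuleCat.Hom.hom (Functor.Monoidal.η_ε (F := F)))
  have hr1 : Module.finrank k (F.obj (𝟙_ C)) = 1 := by
    rw [e0.finrank_eq, Module.finrank_self]
  have part5 : Δ (i (𝟙_ C) LinearMap.id)
      = i (𝟙_ C) LinearMap.id ⊗ₜ[k] i (𝟙_ C) LinearMap.id := by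
    have h1 := LinearMap.congr_fun (hΔ (𝟙_ C)) LinearMap.id
    simp only [LinearMap.comp_apply] at h1
    rw [h1, comatrixComul_of_finrank_one hr1, TensorProduct.map_tmul]
  have part6 : ε (i (𝟙_ C) LinearMap.id) = 1 := by
    have h1 := LinearMap.congr_fun (hε (𝟙_ C)) LinearMap.id
    simp only [LinearMap.comp_apply] at h1
    rw [h1, trace_of_finrank_one hr1]
  exact ⟨part1, part2, part3, part4, part5, part6⟩
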